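/- Let N ≥ 1 be an integer, α > 0, ρ > 0, and let w₀ : ℝ^N → [0,∞) be measurable. Assume that on the set {|x| > ρ} one can write w₀ = ψ₁ + ψ₂ with ψ₁ ∈ L¹(ℝ^N), ψ₂ ∈ L^∞(ℝ^N), and that limsup_{t ↓ 0} (αt)^{1/α} ∫_{ℝ^N} G(t,0,y) w₀(y) dy > 1. Let u₀ : ℝ^N → [0,∞) be measurable with u₀(x) ≥ w₀(x) for almost every x with |x| < ρ. Then limsup_{t ↓ 0} (αt)^{1/α} · ess sup_{x ∈ ℝ^N} ∫_{ℝ^N} G(t,x,y) u₀(y) dy > 1. -/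

import Mathlib

open MeasureTheory Real Set Filter ENNReal Topology

/-- The Gaussian heat kernel `G(t,x,y) = (4πt)^{-N/2} exp(-|x-y|²/(4t))` on `ℝ^N`. -/
noncomputable def heatKernel (N : ℕ) (t : ℝ) (x y : EuclideanSpace ℝ (Fin N)) : ℝ :=
  (4 * π * t) ^ (-(N : ℝ) / 2) * Real.exp (-‖x - y‖ ^ 2 / (4 * t))

section Aux

lemma heatKernel_cont_x (N : ℕ) (t : ℝ) (y : EuclideanSpace ℝ (Fin N)) :
    Continuous (fun x : EuclideanSpace ℝ (Fin N) => heatKernel N t x y) := by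
  unfold heatKernel
  fun_prop

lemma heatKernel_cont_y (N : ℕ) (t : ℝ) (x : EuclideanSpace ℝ (Fin N)) :
    Continuous (fun y : EuclideanSpace ℝ (Fin N) => heatKernel N t x y) := by
  unfold heatKernel
  fun_prop

lemma heatKernel_nonneg (N : ℕ) {t : ℝ} (ht : 0 ≤ t) (x y : EuclideanSpace ℝ (Fin N)) :
    0 ≤ heatKernel N t x y :=
  mul_nonneg (Real.rpow_nonneg (by positivity) _) (Real.exp_pos _).le

/-- Lower semicontinuity / Fatou: the value at `0` is at most the essential sup. -/
lemma essSup_ge_at_zero (N : ℕ) (t : ℝ) (u₀ : EuclideanSpace ℝ (Fin N) → ℝ)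
    (hu₀m : Measurable u₀) :
    (∫⁻ y, ENNReal.ofReal (heatKernel N t 0 y * u₀ y)) ≤
      essSup (fun x => ∫⁻ y, ENNReal.ofReal (heatKernel N t x y * u₀ y)) volume := by
  set F : EuclideanSpace ℝ (Fin N) → ℝ≥0∞ :=
    fun x => ∫⁻ y, ENNReal.ofReal (heatKernel N t x y * u₀ y) with hF
  by_contra hcon
  push_neg at hcon
  set S : Set (EuclideanSpace ℝ (Fin N)) := {x | F x ≤ essSup F volume} with hS
  have haeS : ∀ᵐ x ∂(volume : Measure (EuclideanSpace ℝ (Fin N))), x ∈ S :=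
    ae_le_essSup F
  have hSc : (volume : Measure (EuclideanSpace ℝ (Fin N))) {x | ¬ x ∈ S} = 0 :=
    ae_iff.1 haeS
  have hNe : (𝓝 (0 : EuclideanSpace ℝ (Fin N)) ⊓ 𝓟 S).NeBot := by
    rw [inf_principal_neBot_iff]
    intro U hU
    by_contra hemp
    rw [Set.not_nonempty_iff_eq_empty] at hemp
    have hsub : U ⊆ {x | ¬ x ∈ S} := by
      intro x hx hxS
      have : x ∈ U ∩ S := Set.mem_inter hx hxS
      simp [hemp] at this
    have h0 : (volume : Measure (EuclideanSpace ℝ (Fin N))) U = 0 :=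
      measure_mono_null hsub hSc
    exact absurd h0 (Measure.measure_pos_of_mem_nhds _ hU).ne'
  obtain ⟨x, hx⟩ := (𝓝 (0 : EuclideanSpace ℝ (Fin N)) ⊓ 𝓟 S).exists_seq_tendsto
  have hx0 : Tendsto x atTop (𝓝 (0 : EuclideanSpace ℝ (Fin N))) := hx.mono_right inf_le_left
  have hxS : ∀ᶠ n in atTop, F (x n) ≤ essSup F volume := by
    have h := hx.mono_right inf_le_right
    rw [tendsto_principal] at h
    exact h
  have hpt : ∀ y, Tendsto (fun n => ENNReal.ofReal (heatKernel N t (x n) y * u₀ y)) atTop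
      (𝓝 (ENNReal.ofReal (heatKernel N t 0 y * u₀ y))) := by
    intro y
    have hc : Continuous fun z : EuclideanSpace ℝ (Fin N) =>
        ENNReal.ofReal (heatKernel N t z y * u₀ y) :=
      ENNReal.continuous_ofReal.comp ((heatKernel_cont_x N t y).mul continuous_const)
    exact (hc.tendsto 0).comp hx0
  have hFatou : F 0 ≤ liminf (fun n => F (x n)) atTop := by
    have heq : F 0 = ∫⁻ y, liminf
        (fun n => ENNReal.ofReal (heatKernel N t (x n) y * u₀ y)) atTop := by
      refine lintegral_congr fun y => ?_
      exact ((hpt y).liminf_eq).symm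
    rw [heq]
    exact lintegral_liminf_le fun n =>
      ENNReal.measurable_ofReal.comp ((heatKernel_cont_y N t (x n)).measurable.mul hu₀m)
  have : F 0 ≤ essSup F volume :=
    hFatou.trans (liminf_le_of_frequently_le' (hxS.frequently))
  exact absurd this (not_le.mpr hcon)

end Aux

/-- If `w₀ ≥ 0` is measurable, equal to an `L¹ + L^∞` function on
`{|x| > ρ}`, and satisfies `limsup_{t↓0} (αt)^{1/α} (e^{tΔ}w₀)(0) > 1`, then every
measurable `u₀ ≥ 0` with `u₀ ≥ w₀` a.e. on `{|x| < ρ}` satisfies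
`limsup_{t↓0} (αt)^{1/α} ess sup_x (e^{tΔ}u₀)(x) > 1`. -/
theorem stmt2 (N : ℕ) (hN : 1 ≤ N) (α ρ : ℝ) (hα : 0 < α) (hρ : 0 < ρ)
    (w₀ : EuclideanSpace ℝ (Fin N) → ℝ) (hw₀m : Measurable w₀) (hw₀ : ∀ x, 0 ≤ w₀ x)
    (hsplit : ∃ ψ₁ ψ₂ : EuclideanSpace ℝ (Fin N) → ℝ,
      Integrable ψ₁ ∧ MemLp ψ₂ ⊤ ∧ ∀ x, ρ < ‖x‖ → w₀ x = ψ₁ x + ψ₂ x)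
    (hlim : 1 < Filter.limsup (fun t : ℝ => ENNReal.ofReal ((α * t) ^ (1 / α)) *
      ∫⁻ y, ENNReal.ofReal (heatKernel N t 0 y * w₀ y)) (nhdsWithin 0 (Ioi 0)))
    (u₀ : EuclideanSpace ℝ (Fin N) → ℝ) (hu₀m : Measurable u₀) (hu₀ : ∀ x, 0 ≤ u₀ x)
    (hcomp : ∀ᵐ x ∂volume, ‖x‖ < ρ → w₀ x ≤ u₀ x) :
    1 < Filter.limsup (fun t : ℝ => ENNReal.ofReal ((α * t) ^ (1 / α)) *
      essSup (fun x => ∫⁻ y, ENNReal.ofReal (heatKernel N t x y * u₀ y)) volume)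
      (nhdsWithin 0 (Ioi 0)) := by
  classical
  obtain ⟨ψ₁, ψ₂, hψ₁, hψ₂, hEq⟩ := hsplit
  set K : ℝ → ℝ≥0∞ := fun t => ENNReal.ofReal ((α * t) ^ (1 / α)) with hKdef
  set s : Set (EuclideanSpace ℝ (Fin N)) := {y | ρ < ‖y‖} with hsdef
  have hs : MeasurableSet s := (isOpen_lt continuous_const continuous_norm).measurableSet
  set Fw : ℝ → ℝ≥0∞ := fun t => ∫⁻ y, ENNReal.ofReal (heatKernel N t 0 y * w₀ y) with hFw
  set Oute : ℝ → ℝ≥0∞ := fun t => ∫⁻ y in s, ENNReal.ofReal (heatKernel N t 0 y * w₀ y)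
    with hOute
  -- essSup bound on ψ₂
  set M : ℝ := (eLpNormEssSup ψ₂ volume).toReal with hMdef
  have hMfin : eLpNormEssSup ψ₂ volume ≠ ∞ := by
    have h := hψ₂.2
    rw [eLpNorm_exponent_top] at h
    exact h.ne
  have hM0 : 0 ≤ M := ENNReal.toReal_nonneg
  have hMae : ∀ᵐ y ∂(volume : Measure (EuclideanSpace ℝ (Fin N))), |ψ₂ y| ≤ M := by
    filter_upwards [ae_le_eLpNormEssSup (f := ψ₂)
      (μ := (volume : Measure (EuclideanSpace ℝ (Fin N))))] with y hy
    have h := ENNReal.toReal_mono hMfin hy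
    simpa [Real.norm_eq_abs] using h
  -- Gaussian integrability
  have hgauss : Integrable (fun y : EuclideanSpace ℝ (Fin N) =>
      Real.exp (-(8⁻¹ : ℝ) * ‖y‖ ^ 2)) := by
    have h := (GaussianFourier.integrable_cexp_neg_mul_sq_norm_add
      (V := EuclideanSpace ℝ (Fin N)) (b := ((8 : ℂ)⁻¹)) (by norm_num) 0 0).norm
    refine h.congr ?_
    filter_upwards with y
    rw [Complex.norm_exp]
    congr 1
    simp [← Complex.ofReal_pow]
  -- the decaying real prefactor
  set D : ℝ → ℝ := fun t => (α * t) ^ (1 / α) *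
      ((4 * π * t) ^ (-(N : ℝ) / 2) * Real.exp (-ρ ^ 2 / (8 * t))) with hDdef
  have hDto : Tendsto D (𝓝[>] (0 : ℝ)) (𝓝 0) := by
    have hA : Tendsto (fun t : ℝ => (α * t) ^ (1 / α)) (𝓝[>] (0 : ℝ)) (𝓝 0) := by
      have h1 : Tendsto (fun t : ℝ => α * t) (𝓝[>] (0 : ℝ)) (𝓝 0) := by
        have h0 : Continuous (fun t : ℝ => α * t) := continuous_const.mul continuous_id
        have := (h0.tendsto (0 : ℝ)).mono_left (nhdsWithin_le_nhds (s := Ioi (0 : ℝ)))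
        simpa using this
      have h2 : ContinuousAt (fun x : ℝ => x ^ (1 / α)) 0 :=
        Real.continuousAt_rpow_const 0 (1 / α) (Or.inr (by positivity))
      have h3 := h2.tendsto.comp h1
      rw [Real.zero_rpow (by positivity : (1 / α : ℝ) ≠ 0)] at h3
      exact h3
    have hB : Tendsto (fun t : ℝ => (4 * π * t) ^ (-(N : ℝ) / 2) *
        Real.exp (-ρ ^ 2 / (8 * t))) (𝓝[>] (0 : ℝ)) (𝓝 0) := by
      have hkey := (tendsto_rpow_mul_exp_neg_mul_atTop_nhds_zero ((N : ℝ) / 2) (ρ ^ 2 / 8)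
        (by positivity)).comp tendsto_inv_nhdsGT_zero
      have hkey2 : Tendsto (fun t : ℝ => (4 * π) ^ (-(N : ℝ) / 2) *
          ((t⁻¹) ^ ((N : ℝ) / 2) * Real.exp (-(ρ ^ 2 / 8) * t⁻¹))) (𝓝[>] (0 : ℝ)) (𝓝 0) := by
        have h := hkey.const_mul ((4 * π) ^ (-(N : ℝ) / 2))
        simpa [Function.comp] using h
      refine hkey2.congr' ?_
      filter_upwards [self_mem_nhdsWithin] with t ht
      have ht' : (0 : ℝ) < t := ht
      have heq1 : (4 * π * t) ^ (-(N : ℝ) / 2) =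
          (4 * π) ^ (-(N : ℝ) / 2) * (t⁻¹) ^ ((N : ℝ) / 2) := by
        rw [Real.mul_rpow (by positivity) ht'.le, Real.inv_rpow ht'.le,
          ← Real.rpow_neg ht'.le]
        ring_nf
      have heq2 : Real.exp (-(ρ ^ 2 / 8) * t⁻¹) = Real.exp (-ρ ^ 2 / (8 * t)) := by
        congr 1
        field_simp
      rw [heq1, heq2]
      ring
    have h := hA.mul hB
    rw [hDdef]
    simpa using h
  -- quantities controlling the outer integral
  set Etot : ℝ≥0∞ := (∫⁻ y, ENNReal.ofReal |ψ₁ y|) +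
      ENNReal.ofReal M * ∫⁻ y : EuclideanSpace ℝ (Fin N),
        ENNReal.ofReal (Real.exp (-(8⁻¹ : ℝ) * ‖y‖ ^ 2)) with hEtot
  have hEtotfin : Etot ≠ ∞ := by
    have h1 : (∫⁻ y, ENNReal.ofReal |ψ₁ y|) < ∞ := by
      simpa using hψ₁.abs.lintegral_lt_top
    have h2 : (∫⁻ y, ENNReal.ofReal (Real.exp (-(8⁻¹ : ℝ) * ‖y‖ ^ 2))
        ∂(volume : Measure (EuclideanSpace ℝ (Fin N)))) < ∞ := hgauss.lintegral_lt_top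
    exact (ENNReal.add_lt_top.2 ⟨h1, ENNReal.mul_lt_top ENNReal.ofReal_lt_top h2⟩).ne
  -- outer bound, eventually in t
  have houter : ∀ᶠ t in 𝓝[>] (0 : ℝ), K t * Oute t ≤ ENNReal.ofReal (D t) * Etot := by
    filter_upwards [Ioc_mem_nhdsGT_of_mem
      (⟨le_refl _, zero_lt_one⟩ : (0 : ℝ) ∈ Ico (0 : ℝ) 1)] with t ht
    obtain ⟨ht0, ht1⟩ := ht
    set D' : ℝ := (4 * π * t) ^ (-(N : ℝ) / 2) * Real.exp (-ρ ^ 2 / (8 * t)) with hD'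
    have hD'0 : 0 ≤ D' := mul_nonneg (Real.rpow_nonneg (by positivity) _) (Real.exp_pos _).le
    -- pointwise a.e. bound on s
    have hptwise : ∀ᵐ y ∂((volume : Measure (EuclideanSpace ℝ (Fin N))).restrict s),
        ENNReal.ofReal (heatKernel N t 0 y * w₀ y) ≤
          ENNReal.ofReal D' *
            (ENNReal.ofReal |ψ₁ y| +
              ENNReal.ofReal (Real.exp (-(8⁻¹ : ℝ) * ‖y‖ ^ 2)) * ENNReal.ofReal M) := by
      rw [ae_restrict_iff' hs]
      filter_upwards [hMae] with y hy hys
      have hys' : ρ < ‖y‖ := hys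
      have hρy : ρ ^ 2 ≤ ‖y‖ ^ 2 := by nlinarith [norm_nonneg y]
      have hbound : heatKernel N t 0 y * w₀ y ≤
          D' * (|ψ₁ y| + Real.exp (-(8⁻¹ : ℝ) * ‖y‖ ^ 2) * M) := by
        have hw : w₀ y ≤ |ψ₁ y| + M := by
          rw [hEq y hys']
          exact add_le_add (le_abs_self _) ((le_abs_self _).trans hy)
        have hnorm : ‖(0 : EuclideanSpace ℝ (Fin N)) - y‖ = ‖y‖ := by
          rw [zero_sub, norm_neg]
        have hexp : Real.exp (-‖(0 : EuclideanSpace ℝ (Fin N)) - y‖ ^ 2 / (4 * t)) ≤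
            Real.exp (-ρ ^ 2 / (8 * t)) * Real.exp (-(8⁻¹ : ℝ) * ‖y‖ ^ 2) := by
          rw [← Real.exp_add, hnorm]
          apply Real.exp_le_exp.2
          have hkey : -ρ ^ 2 / (8 * t) + -(8⁻¹ : ℝ) * ‖y‖ ^ 2 - (-‖y‖ ^ 2 / (4 * t)) =
              (2 * ‖y‖ ^ 2 - ρ ^ 2 - t * ‖y‖ ^ 2) / (8 * t) := by
            field_simp
            ring
          have hnum : (0 : ℝ) ≤ 2 * ‖y‖ ^ 2 - ρ ^ 2 - t * ‖y‖ ^ 2 := by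
            nlinarith [sq_nonneg (‖y‖)]
          have hpos : (0 : ℝ) ≤ (2 * ‖y‖ ^ 2 - ρ ^ 2 - t * ‖y‖ ^ 2) / (8 * t) :=
            div_nonneg hnum (by positivity)
          linarith [hkey ▸ hpos]
        have hP : (0 : ℝ) ≤ (4 * π * t) ^ (-(N : ℝ) / 2) :=
          Real.rpow_nonneg (by positivity) _
        calc heatKernel N t 0 y * w₀ y
            = (4 * π * t) ^ (-(N : ℝ) / 2) *
                Real.exp (-‖(0 : EuclideanSpace ℝ (Fin N)) - y‖ ^ 2 / (4 * t)) * w₀ y := rfl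
          _ ≤ (4 * π * t) ^ (-(N : ℝ) / 2) *
                (Real.exp (-ρ ^ 2 / (8 * t)) * Real.exp (-(8⁻¹ : ℝ) * ‖y‖ ^ 2)) *
                (|ψ₁ y| + M) := by
              apply mul_le_mul (mul_le_mul_of_nonneg_left hexp hP) hw (hw₀ y) (by positivity)
          _ = D' * (Real.exp (-(8⁻¹ : ℝ) * ‖y‖ ^ 2) * (|ψ₁ y| + M)) := by
              rw [hD']; ring
          _ ≤ D' * (|ψ₁ y| + Real.exp (-(8⁻¹ : ℝ) * ‖y‖ ^ 2) * M) := by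
              apply mul_le_mul_of_nonneg_left ?_ hD'0
              have hexp1 : Real.exp (-(8⁻¹ : ℝ) * ‖y‖ ^ 2) ≤ 1 := by
                rw [Real.exp_le_one_iff]
                nlinarith [sq_nonneg (‖y‖)]
              have hexp0 := (Real.exp_pos (-(8⁻¹ : ℝ) * ‖y‖ ^ 2)).le
              nlinarith [abs_nonneg (ψ₁ y)]
      calc ENNReal.ofReal (heatKernel N t 0 y * w₀ y)
          ≤ ENNReal.ofReal (D' * (|ψ₁ y| + Real.exp (-(8⁻¹ : ℝ) * ‖y‖ ^ 2) * M)) :=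
            ENNReal.ofReal_le_ofReal hbound
        _ = ENNReal.ofReal D' * (ENNReal.ofReal |ψ₁ y| +
              ENNReal.ofReal (Real.exp (-(8⁻¹ : ℝ) * ‖y‖ ^ 2)) * ENNReal.ofReal M) := by
            rw [ENNReal.ofReal_mul hD'0, ENNReal.ofReal_add (abs_nonneg _)
              (mul_nonneg (Real.exp_pos _).le hM0),
              ENNReal.ofReal_mul (Real.exp_pos _).le]
    have hOle : Oute t ≤ ENNReal.ofReal D' * Etot := by
      calc Oute t ≤ ∫⁻ y in s, ENNReal.ofReal D' *
            (ENNReal.ofReal |ψ₁ y| +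
              ENNReal.ofReal (Real.exp (-(8⁻¹ : ℝ) * ‖y‖ ^ 2)) * ENNReal.ofReal M) :=
            lintegral_mono_ae hptwise
        _ ≤ ∫⁻ y, ENNReal.ofReal D' *
            (ENNReal.ofReal |ψ₁ y| +
              ENNReal.ofReal (Real.exp (-(8⁻¹ : ℝ) * ‖y‖ ^ 2)) * ENNReal.ofReal M) :=
            setLIntegral_le_lintegral _ _
        _ = ENNReal.ofReal D' * Etot := by
            rw [lintegral_const_mul' _ _ ENNReal.ofReal_ne_top]
            congr 1
            have haem : AEMeasurable (fun y : EuclideanSpace ℝ (Fin N) =>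
                ENNReal.ofReal |ψ₁ y|) volume :=
              ENNReal.measurable_ofReal.comp_aemeasurable hψ₁.abs.aemeasurable
            rw [hEtot, lintegral_add_left' haem, lintegral_mul_const' _ _ ENNReal.ofReal_ne_top,
              mul_comm (ENNReal.ofReal M)]
    calc K t * Oute t ≤ K t * (ENNReal.ofReal D' * Etot) :=
          mul_le_mul_right hOle _
      _ = ENNReal.ofReal (D t) * Etot := by
          rw [← mul_assoc]
          congr 1
          simp only [hKdef, hDdef, hD']
          rw [← ENNReal.ofReal_mul (Real.rpow_nonneg (by positivity) _)]
  -- the outer term tends to 0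
  have htend0 : Tendsto (fun t => K t * Oute t) (𝓝[>] (0 : ℝ)) (𝓝 0) := by
    have hupper : Tendsto (fun t => ENNReal.ofReal (D t) * Etot) (𝓝[>] (0 : ℝ)) (𝓝 0) := by
      have h1 : Tendsto (fun t => ENNReal.ofReal (D t)) (𝓝[>] (0 : ℝ)) (𝓝 0) := by
        have h := (ENNReal.continuous_ofReal.tendsto 0).comp hDto
        simpa [Function.comp_def] using h
      have h2 := ENNReal.Tendsto.mul_const h1 (Or.inr hEtotfin)
      simpa using h2
    refine tendsto_of_tendsto_of_tendsto_of_le_of_le' tendsto_const_nhds hupper ?_ houter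
    filter_upwards with t using zero_le
  -- choose intermediate constants
  obtain ⟨c, hc1, hcL⟩ := exists_between hlim
  obtain ⟨b, hb1, hbc⟩ := exists_between hc1
  have hctop : c ≠ ∞ := hcL.ne_top
  have hbtop : b ≠ ∞ := (hbc.trans hctop.lt_top).ne
  have hcb_pos : (0 : ℝ≥0∞) < c - b := tsub_pos_iff_lt.2 hbc
  have hfreq : ∃ᶠ t in 𝓝[>] (0 : ℝ), c < K t * Fw t :=
    frequently_lt_of_lt_limsup (by isBoundedDefault) hcL
  have hev1 : ∀ᶠ t in 𝓝[>] (0 : ℝ), K t * Oute t < c - b :=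
    htend0.eventually_lt_const hcb_pos
  have hev2 : ∀ᶠ t in 𝓝[>] (0 : ℝ), (0 : ℝ) < t := eventually_mem_nhdsWithin
  -- sphere has measure zero
  have hsph : ∀ᵐ y ∂(volume : Measure (EuclideanSpace ℝ (Fin N))), ‖y‖ ≠ ρ := by
    have h0 : (volume : Measure (EuclideanSpace ℝ (Fin N)))
        (Metric.sphere (0 : EuclideanSpace ℝ (Fin N)) ρ) = 0 :=
      Measure.addHaar_sphere_of_ne_zero (μ := volume) (0 : EuclideanSpace ℝ (Fin N)) hρ.ne'
    rw [ae_iff]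
    refine measure_mono_null ?_ h0
    intro y hy
    simp only [Set.mem_setOf_eq, not_not] at hy
    simpa [mem_sphere_zero_iff_norm] using hy
  -- main frequently statement
  have hmain : ∃ᶠ t in 𝓝[>] (0 : ℝ), b ≤ K t *
      essSup (fun x => ∫⁻ y, ENNReal.ofReal (heatKernel N t x y * u₀ y)) volume := by
    refine (hfreq.and_eventually (hev1.and hev2)).mono ?_
    rintro t ⟨h1, h2, ht⟩
    have hsplitInt : Fw t = Oute t +
        ∫⁻ y in sᶜ, ENNReal.ofReal (heatKernel N t 0 y * w₀ y) :=
      (lintegral_add_compl _ hs).symm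
    have hinner : b < K t * ∫⁻ y in sᶜ, ENNReal.ofReal (heatKernel N t 0 y * w₀ y) := by
      by_contra hle
      push_neg at hle
      have hKI_ne : K t * (∫⁻ y in sᶜ, ENNReal.ofReal (heatKernel N t 0 y * w₀ y)) ≠ ∞ :=
        (hle.trans_lt hbtop.lt_top).ne
      have hlt : K t * Fw t < c := by
        have heq : K t * Fw t =
            K t * (∫⁻ y in sᶜ, ENNReal.ofReal (heatKernel N t 0 y * w₀ y)) +
              K t * Oute t := by
          rw [hsplitInt, mul_add, add_comm]
        rw [heq]
        calc K t * (∫⁻ y in sᶜ, ENNReal.ofReal (heatKernel N t 0 y * w₀ y)) + K t * Oute t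
            < b + (c - b) := ENNReal.add_lt_add_of_le_of_lt hKI_ne hle h2
          _ = c := add_tsub_cancel_of_le hbc.le
      exact absurd h1 (not_lt.mpr hlt.le)
    have hm1 : (∫⁻ y in sᶜ, ENNReal.ofReal (heatKernel N t 0 y * w₀ y)) ≤
        ∫⁻ y in sᶜ, ENNReal.ofReal (heatKernel N t 0 y * u₀ y) := by
      apply lintegral_mono_ae
      rw [ae_restrict_iff' hs.compl]
      filter_upwards [hcomp, hsph] with y hcy hny hysc
      have hyle : ‖y‖ ≤ ρ := not_lt.mp hysc
      have hylt : ‖y‖ < ρ := lt_of_le_of_ne hyle hny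
      exact ENNReal.ofReal_le_ofReal
        (mul_le_mul_of_nonneg_left (hcy hylt) (heatKernel_nonneg N ht.le 0 y))
    have hm2 := setLIntegral_le_lintegral (μ := (volume : Measure (EuclideanSpace ℝ (Fin N)))) sᶜ
      (fun y => ENNReal.ofReal (heatKernel N t 0 y * u₀ y))
    have hm3 := essSup_ge_at_zero N t u₀ hu₀m
    calc b ≤ K t * ∫⁻ y in sᶜ, ENNReal.ofReal (heatKernel N t 0 y * w₀ y) := hinner.le
      _ ≤ K t * essSup (fun x => ∫⁻ y, ENNReal.ofReal (heatKernel N t x y * u₀ y)) volume :=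
          mul_le_mul_right ((hm1.trans hm2).trans hm3) _
  have hfinal : b ≤ Filter.limsup (fun t : ℝ => K t *
      essSup (fun x => ∫⁻ y, ENNReal.ofReal (heatKernel N t x y * u₀ y)) volume)
      (𝓝[>] (0 : ℝ)) :=
    le_limsup_of_frequently_le' hmain
  exact lt_of_lt_of_le hb1 hfinal
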